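/- Let κ > 0 and α > 0. Let L : (0,∞) → (0,∞) be nondecreasing and regularly varying of index α at 0, i.e., for every u > 0, L(ux)/L(x) → u^α as x → 0⁺. Let f : (0,∞) → [0,∞) be Lebesgue integrable with f(y)/L(y) → 1 as y → 0⁺. Then lim_{x → 0⁺} (x^{-(κ+1)}·∫₀^∞ e^{-y/x}·y^κ·f(y) dy) / L(x) = Γ(α+κ+1). -/

import Mathlib

open MeasureTheory Filter Set Real

private lemma double_iter (L : ℝ → ℝ) (C T : ℝ) (hC : 0 ≤ C) (hT : 0 < T)
    (hd : ∀ t : ℝ, 0 < t → t < T → L (2 * t) ≤ C * L t) :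
    ∀ n : ℕ, ∀ x : ℝ, 0 < x → x * 2 ^ n < 2 * T → L (x * 2 ^ n) ≤ C ^ n * L x := by
  intro n
  induction n with
  | zero => intro x hx _; simp
  | succ n ih =>
    intro x hx h
    have h2n : (0:ℝ) < 2 ^ n := by positivity
    have heq : x * 2 ^ (n+1) = 2 * (x * 2 ^ n) := by ring
    have hlt : x * 2 ^ n < T := by nlinarith [heq ▸ h]
    have h1 : L (x * 2 ^ (n+1)) ≤ C * L (x * 2 ^ n) := by
      rw [heq]; exact hd _ (by positivity) hlt
    have h2 : L (x * 2 ^ n) ≤ C ^ n * L x := ih x hx (by nlinarith)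
    calc L (x * 2 ^ (n+1)) ≤ C * L (x * 2 ^ n) := h1
      _ ≤ C * (C ^ n * L x) := mul_le_mul_of_nonneg_left h2 hC
      _ = C ^ (n+1) * L x := by ring

private lemma rpow_pow_comm (a : ℝ) (n : ℕ) :
    ((2:ℝ) ^ a) ^ n = ((2:ℝ) ^ n) ^ a := by
  rw [← Real.rpow_natCast ((2:ℝ) ^ a) n, ← Real.rpow_natCast (2:ℝ) n,
    ← Real.rpow_mul (by norm_num), ← Real.rpow_mul (by norm_num), mul_comm]

private lemma potter_upper (L : ℝ → ℝ) (α T : ℝ) (hα : 0 < α) (hT : 0 < T)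
    (hLpos : ∀ x : ℝ, 0 < x → 0 < L x)
    (hLmono : ∀ a b : ℝ, 0 < a → a ≤ b → L a ≤ L b)
    (hd : ∀ t : ℝ, 0 < t → t < T → L (2 * t) ≤ 2 ^ (α+1) * L t) :
    ∀ x u : ℝ, 0 < x → 0 < u → x * u < T →
      L (x * u) ≤ 2 ^ (α+1) * (1 + u ^ (α+1)) * L x := by
  intro x u hx hu hxuT
  have hCpos : (0:ℝ) < 2 ^ (α+1) := Real.rpow_pos_of_pos (by norm_num) _
  have hupos : (0:ℝ) ≤ u ^ (α+1) := Real.rpow_nonneg hu.le _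
  have hLx := hLpos x hx
  rcases le_or_gt u 1 with h1 | h1
  · have hL1 : L (x*u) ≤ L x := hLmono _ _ (by positivity) (by nlinarith)
    have hC1 : (1:ℝ) ≤ 2 ^ (α+1) := Real.one_le_rpow one_le_two (by linarith)
    nlinarith [mul_le_mul_of_nonneg_right hC1 hLx.le, mul_nonneg (mul_nonneg hCpos.le hupos) hLx.le]
  · classical
    obtain ⟨m₀, hm₀⟩ := pow_unbounded_of_one_lt u (one_lt_two (α := ℝ))
    have hex : ∃ n : ℕ, u ≤ 2 ^ n := ⟨m₀, hm₀.le⟩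
    have hun : u ≤ 2 ^ (Nat.find hex) := Nat.find_spec hex
    have hn0 : Nat.find hex ≠ 0 := by
      intro h0; rw [h0] at hun; simp at hun; linarith
    obtain ⟨m, hmeq⟩ := Nat.exists_eq_succ_of_ne_zero hn0
    simp only [Nat.succ_eq_add_one] at hmeq
    rw [hmeq] at hun
    have hmin : ¬ (u ≤ 2 ^ m) := Nat.find_min hex (by omega)
    push_neg at hmin
    have h2m : (0:ℝ) < 2 ^ m := by positivity
    have h2n : (2:ℝ) ^ (m+1) < 2 * u := by
      have : (2:ℝ)^(m+1) = 2 * 2^m := by ring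
      nlinarith
    have hlt2T : x * 2 ^ (m+1) < 2*T := by nlinarith
    have hiter := double_iter L (2^(α+1)) T hCpos.le hT hd (m+1) x hx hlt2T
    have hmono2 : L (x*u) ≤ L (x * 2^(m+1)) := hLmono _ _ (by positivity) (mul_le_mul_of_nonneg_left hun hx.le)
    have hle : ((2:ℝ)^(m+1))^(α+1) ≤ (2*u)^(α+1) :=
      Real.rpow_le_rpow (by positivity) h2n.le (by linarith)
    have h2u : ((2:ℝ)*u)^(α+1) = 2^(α+1) * u^(α+1) := Real.mul_rpow (by norm_num) hu.le
    calc L (x*u) ≤ L (x*2^(m+1)) := hmono2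
      _ ≤ ((2:ℝ)^(α+1))^(m+1) * L x := hiter
      _ = ((2:ℝ)^(m+1))^(α+1) * L x := by rw [_root_.rpow_pow_comm]
      _ ≤ (2*u)^(α+1) * L x := mul_le_mul_of_nonneg_right hle hLx.le
      _ = 2^(α+1) * u^(α+1) * L x := by rw [h2u]
      _ ≤ 2^(α+1)*(1+u^(α+1)) * L x := by nlinarith

private lemma potter_lower (L : ℝ → ℝ) (α T : ℝ) (hα : 0 < α) (hT : 0 < T)
    (hLpos : ∀ x : ℝ, 0 < x → 0 < L x)
    (hLmono : ∀ a b : ℝ, 0 < a → a ≤ b → L a ≤ L b)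
    (hd : ∀ t : ℝ, 0 < t → t < T → L (2 * t) ≤ 2 ^ (α+1) * L t) :
    ∀ x : ℝ, 0 < x → x ≤ T/2 → L (T/2) / T ^ (α+1) * x ^ (α+1) ≤ L x := by
  intro x hx hxT
  classical
  have hCpos : (0:ℝ) < 2 ^ (α+1) := Real.rpow_pos_of_pos (by norm_num) _
  obtain ⟨m₀, hm₀⟩ := pow_unbounded_of_one_lt (T/2/x) (one_lt_two (α := ℝ))
  have hex : ∃ n : ℕ, T/2 ≤ x * 2 ^ n := by
    refine ⟨m₀, ?_⟩
    rw [div_lt_iff₀ hx] at hm₀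
    nlinarith
  have hn : T/2 ≤ x * 2 ^ (Nat.find hex) := Nat.find_spec hex
  have hb : x * 2 ^ (Nat.find hex) ≤ T := by
    rcases Nat.eq_zero_or_pos (Nat.find hex) with h0 | hpos
    · rw [h0]; simpa using by linarith
    · obtain ⟨m, hmeq⟩ := Nat.exists_eq_succ_of_ne_zero hpos.ne'
      have hmin : ¬ (T/2 ≤ x * 2 ^ m) := Nat.find_min hex (by omega)
      push_neg at hmin
      rw [hmeq]
      have h2 : x * 2 ^ (Nat.succ m) = 2 * (x * 2 ^ m) := by rw [pow_succ]; ring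
      nlinarith
  have hiter := double_iter L (2^(α+1)) T hCpos.le hT hd (Nat.find hex) x hx (by linarith)
  have hmono := hLmono (T/2) (x * 2 ^ (Nat.find hex)) (by positivity) hn
  have h2n : (2:ℝ) ^ (Nat.find hex) ≤ T / x := by
    rw [le_div_iff₀ hx]; nlinarith
  have hpow : ((2:ℝ)^(α+1))^(Nat.find hex) ≤ (T/x)^(α+1) := by
    rw [_root_.rpow_pow_comm]
    exact Real.rpow_le_rpow (by positivity) h2n (by linarith)
  have hLx := hLpos x hx
  have hdiv : ((T:ℝ)/x)^(α+1) = T^(α+1)/x^(α+1) := Real.div_rpow hT.le hx.le _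
  have hx1 : (0:ℝ) < x^(α+1) := Real.rpow_pos_of_pos hx _
  have hT1 : (0:ℝ) < T^(α+1) := Real.rpow_pos_of_pos hT _
  have key : L (T/2) ≤ T^(α+1)/x^(α+1) * L x := by
    calc L (T/2) ≤ L (x * 2 ^ (Nat.find hex)) := hmono
      _ ≤ ((2:ℝ)^(α+1))^(Nat.find hex) * L x := hiter
      _ ≤ (T/x)^(α+1) * L x := mul_le_mul_of_nonneg_right hpow hLx.le
      _ = T^(α+1)/x^(α+1) * L x := by rw [hdiv]
  rw [div_mul_eq_mul_div, div_le_iff₀ hT1]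
  have := mul_le_mul_of_nonneg_right key hx1.le
  calc L (T/2) * x^(α+1) ≤ T^(α+1)/x^(α+1) * L x * x^(α+1) := this
    _ = L x * T^(α+1) := by field_simp

theorem stmt_15 (κ α : ℝ) (hκ : 0 < κ) (hα : 0 < α) (L : ℝ → ℝ)
    (hLpos : ∀ x : ℝ, 0 < x → 0 < L x)
    (hLmono : ∀ a b : ℝ, 0 < a → a ≤ b → L a ≤ L b)
    (hLRV : ∀ u : ℝ, 0 < u →
      Filter.Tendsto (fun x : ℝ => L (u * x) / L x) (nhdsWithin 0 (Set.Ioi 0)) (nhds (u ^ α)))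
    (f : ℝ → ℝ) (hf0 : ∀ y : ℝ, 0 ≤ f y)
    (hfint : MeasureTheory.IntegrableOn f (Set.Ioi 0))
    (hfL : Filter.Tendsto (fun y : ℝ => f y / L y) (nhdsWithin 0 (Set.Ioi 0)) (nhds 1)) :
    Filter.Tendsto
      (fun x : ℝ =>
        (x ^ (-(κ + 1)) * ∫ y in Set.Ioi (0:ℝ), Real.exp (-y / x) * y ^ κ * f y) / L x)
      (nhdsWithin 0 (Set.Ioi 0)) (nhds (Real.Gamma (α + κ + 1))) := by
  classical
  -- Step 1: obtain T with the basic eventual estimates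
  have hev1 : ∀ᶠ y in nhdsWithin 0 (Set.Ioi 0), f y / L y < 2 :=
    hfL.eventually_lt_const one_lt_two
  have hev2 : ∀ᶠ t in nhdsWithin 0 (Set.Ioi 0), L (2*t) / L t < 2 ^ (α+1) := by
    have h2a : (2:ℝ)^α < 2^(α+1) :=
      Real.rpow_lt_rpow_of_exponent_lt one_lt_two (by linarith)
    exact (hLRV 2 two_pos).eventually_lt_const h2a
  have hev := hev1.and hev2
  rw [Filter.eventually_iff, mem_nhdsGT_iff_exists_Ioo_subset] at hev
  obtain ⟨ε, hε, hsub⟩ := hev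
  set T := min ε 1 with hTdef
  have hT : 0 < T := lt_min hε zero_lt_one
  have hT1 : T ≤ 1 := min_le_right _ _
  have h1 : ∀ y : ℝ, 0 < y → y < T → f y ≤ 2 * L y := by
    intro y hy hyT
    have hmem := hsub ⟨hy, lt_of_lt_of_le hyT (min_le_left _ _)⟩
    have hLy := hLpos y hy
    have := (div_lt_iff₀ hLy).1 hmem.1
    linarith
  have h2 : ∀ t : ℝ, 0 < t → t < T → L (2*t) ≤ 2^(α+1) * L t := by
    intro t ht htT
    have hmem := hsub ⟨ht, lt_of_lt_of_le htT (min_le_left _ _)⟩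
    have hLt := hLpos t ht
    have := (div_lt_iff₀ hLt).1 hmem.2
    linarith
  have hup := potter_upper L α T hα hT hLpos hLmono h2
  have hlow := potter_lower L α T hα hT hLpos hLmono h2
  set c := L (T/2) / T^(α+1) with hcdef
  have hc : 0 < c := div_pos (hLpos _ (by positivity)) (Real.rpow_pos_of_pos hT _)
  set φ : ℝ → ℝ → ℝ := fun x y => Real.exp (-y/x) * y ^ κ * f y with hφ
  set K := ((4:ℝ)*κ)^κ with hKdef
  have hKpos : 0 < K := Real.rpow_pos_of_pos (by positivity) _
  -- exponential bound for the power function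
  have hexp_bound : ∀ y : ℝ, 0 < y → y ^ κ ≤ K * Real.exp (y/4) := by
    intro y hy
    have h4κ : (0:ℝ) < 4*κ := by positivity
    rw [Real.rpow_def_of_pos hy, hKdef, Real.rpow_def_of_pos h4κ, ← Real.exp_add]
    apply Real.exp_le_exp.2
    have hlog : Real.log y = Real.log (4*κ) + Real.log (y/(4*κ)) := by
      rw [← Real.log_mul (by positivity) (by positivity)]
      congr 1
      field_simp
    have hlog2 : Real.log (y/(4*κ)) ≤ y/(4*κ) := by
      have := Real.log_le_sub_one_of_pos (show (0:ℝ) < y/(4*κ) by positivity)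
      linarith
    have harith : (y/(4*κ))*κ = y/4 := by field_simp
    calc Real.log y * κ = Real.log (4*κ)*κ + Real.log (y/(4*κ))*κ := by rw [hlog]; ring
      _ ≤ Real.log (4*κ)*κ + (y/(4*κ))*κ := by nlinarith
      _ = Real.log (4*κ)*κ + y/4 := by rw [harith]
  -- measurability and integrability of φ x
  have hφ_aesm : ∀ x : ℝ, 0 < x →
      MeasureTheory.AEStronglyMeasurable (φ x)
        (MeasureTheory.volume.restrict (Set.Ioi 0)) := by
    intro x hx
    apply MeasureTheory.AEStronglyMeasurable.mul _ hfint.1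
    apply Continuous.aestronglyMeasurable
    exact (Real.continuous_exp.comp (continuous_id.neg.div_const x)).mul
      (Real.continuous_rpow_const hκ.le)
  have hφ_nonneg : ∀ x y : ℝ, 0 ≤ y → 0 ≤ φ x y := by
    intro x y hy
    exact mul_nonneg (mul_nonneg (Real.exp_nonneg _) (Real.rpow_nonneg hy _)) (hf0 y)
  have hφ_bound : ∀ x y : ℝ, 0 < x → x ≤ 1 → 0 < y → φ x y ≤ K * f y := by
    intro x y hx hx1 hy
    have h1e : Real.exp (-y/x) ≤ Real.exp (-y) := by
      apply Real.exp_le_exp.2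
      rw [neg_div]
      have : y ≤ y / x := le_div_self hy.le hx hx1
      linarith
    have h2e : y ^ κ ≤ K * Real.exp (y/4) := hexp_bound y hy
    have e1 : Real.exp (-y) * Real.exp (y/4) ≤ 1 := by
      rw [← Real.exp_add]
      apply Real.exp_le_one_iff.2
      linarith
    have hA : Real.exp (-y/x) * y ^ κ ≤ K := by
      calc Real.exp (-y/x) * y ^ κ ≤ Real.exp (-y) * (K * Real.exp (y/4)) :=
            mul_le_mul h1e h2e (Real.rpow_nonneg hy.le κ) (Real.exp_nonneg _)
        _ = K * (Real.exp (-y) * Real.exp (y/4)) := by ring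
        _ ≤ K * 1 := mul_le_mul_of_nonneg_left e1 hKpos.le
        _ = K := mul_one K
    calc φ x y = (Real.exp (-y/x) * y ^ κ) * f y := rfl
      _ ≤ K * f y := mul_le_mul_of_nonneg_right hA (hf0 y)
  have hφint : ∀ x : ℝ, 0 < x → x ≤ 1 → MeasureTheory.IntegrableOn (φ x) (Set.Ioi 0) := by
    intro x hx hx1
    apply MeasureTheory.Integrable.mono' (hfint.const_mul K) (hφ_aesm x hx)
    rw [MeasureTheory.ae_restrict_iff' measurableSet_Ioi]
    filter_upwards with y hy
    rw [Real.norm_eq_abs, abs_of_nonneg (hφ_nonneg x y hy.le)]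
    exact hφ_bound x y hx hx1 hy
  -- composition measurability
  have hqmp : ∀ x : ℝ, 0 < x →
      MeasureTheory.Measure.QuasiMeasurePreserving (fun u : ℝ => x*u)
        (MeasureTheory.volume.restrict (Set.Ioi 0))
        (MeasureTheory.volume.restrict (Set.Ioi 0)) := by
    intro x hx
    refine ⟨(measurable_const_mul x), ?_⟩
    have hpre : (fun u : ℝ => x*u) ⁻¹' (Set.Ioi 0) = Set.Ioi 0 := by
      have := Set.preimage_const_mul_Ioi₀ (0:ℝ) hx
      simpa using this
    have hmap : MeasureTheory.Measure.map (fun u : ℝ => x*u)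
        (MeasureTheory.volume.restrict (Set.Ioi 0))
        = ((MeasureTheory.volume : MeasureTheory.Measure ℝ).map
            (fun u : ℝ => x*u)).restrict (Set.Ioi 0) := by
      rw [MeasureTheory.Measure.restrict_map (measurable_const_mul x) measurableSet_Ioi, hpre]
    rw [hmap, Real.map_volume_mul_left hx.ne', MeasureTheory.Measure.restrict_smul]
    exact MeasureTheory.Measure.smul_absolutelyContinuous
  have hcomp_aesm : ∀ x : ℝ, 0 < x →
      MeasureTheory.AEStronglyMeasurable (fun u : ℝ => f (x*u))
        (MeasureTheory.volume.restrict (Set.Ioi 0)) :=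
    fun x hx => hfint.1.comp_quasiMeasurePreserving (hqmp x hx)
  -- the rescaled family
  have hFfam_aesm : ∀ x : ℝ, 0 < x →
      MeasureTheory.AEStronglyMeasurable
        (fun u : ℝ => if x*u < T then Real.exp (-u) * u^κ * (f (x*u) / L x) else 0)
        (MeasureTheory.volume.restrict (Set.Ioi 0)) := by
    intro x hx
    have heq : (fun u : ℝ => if x*u < T then Real.exp (-u) * u^κ * (f (x*u) / L x) else 0)
        = (Set.Iio (T/x)).indicator (fun u : ℝ => Real.exp (-u) * u^κ * (f (x*u) / L x)) := by
      funext u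
      by_cases hcase : x*u < T
      · rw [if_pos hcase, Set.indicator_of_mem (by rw [Set.mem_Iio, lt_div_iff₀' hx]; exact hcase)]
      · rw [if_neg hcase, Set.indicator_of_notMem (by rw [Set.mem_Iio, lt_div_iff₀' hx]; exact hcase)]
    rw [heq]
    apply MeasureTheory.AEStronglyMeasurable.indicator _ measurableSet_Iio
    simp only [div_eq_mul_inv]
    exact (((Real.continuous_exp.comp continuous_neg).mul
      (Real.continuous_rpow_const hκ.le)).aestronglyMeasurable).mul
      ((hcomp_aesm x hx).mul_const ((L x)⁻¹))
  -- the dominating function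
  set bound : ℝ → ℝ := fun u => (2*2^(α+1)) * (Real.exp (-u) * u^κ + Real.exp (-u) * u^(κ+α+1))
    with hbdef
  have hbound_int : MeasureTheory.Integrable bound
      (MeasureTheory.volume.restrict (Set.Ioi 0)) := by
    apply MeasureTheory.Integrable.const_mul
    have i1 := Real.GammaIntegral_convergent (show (0:ℝ) < κ+1 by linarith)
    have i2 := Real.GammaIntegral_convergent (show (0:ℝ) < κ+α+2 by linarith)
    have i1' : MeasureTheory.IntegrableOn (fun u : ℝ => Real.exp (-u) * u^κ) (Set.Ioi 0) := by
      have : (fun u : ℝ => Real.exp (-u) * u^κ) = fun u : ℝ => Real.exp (-u) * u^(κ+1-1) := by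
        funext u; norm_num
      rw [this]; exact i1
    have i2' : MeasureTheory.IntegrableOn (fun u : ℝ => Real.exp (-u) * u^(κ+α+1))
        (Set.Ioi 0) := by
      have : (fun u : ℝ => Real.exp (-u) * u^(κ+α+1))
          = fun u : ℝ => Real.exp (-u) * u^(κ+α+2-1) := by
        funext u; ring_nf
      rw [this]; exact i2
    exact i1'.add i2'
  -- pointwise limit
  have hlim : ∀ᵐ u ∂(MeasureTheory.volume.restrict (Set.Ioi (0:ℝ))),
      Filter.Tendsto (fun x : ℝ => if x*u < T then Real.exp (-u) * u^κ * (f (x*u) / L x) else 0)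
        (nhdsWithin 0 (Set.Ioi 0)) (nhds (Real.exp (-u) * u^(α+κ))) := by
    rw [MeasureTheory.ae_restrict_iff' measurableSet_Ioi]
    filter_upwards with u hu
    replace hu : (0:ℝ) < u := hu
    have hmapu : Filter.Tendsto (fun x : ℝ => x*u) (nhdsWithin 0 (Set.Ioi 0))
        (nhdsWithin 0 (Set.Ioi 0)) := by
      apply tendsto_nhdsWithin_of_tendsto_nhds_of_eventually_within
      · have h0 : Filter.Tendsto (fun x : ℝ => x*u) (nhds 0) (nhds 0) := by
          simpa using (Filter.tendsto_id (α := ℝ) (x := nhds 0)).mul_const u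
        exact h0.mono_left nhdsWithin_le_nhds
      · filter_upwards [self_mem_nhdsWithin] with x hx
        exact mul_pos hx hu
    have t12 := (hfL.comp hmapu).mul (hLRV u hu)
    rw [one_mul] at t12
    have t3 : Filter.Tendsto (fun x : ℝ => f (x*u) / L x) (nhdsWithin 0 (Set.Ioi 0))
        (nhds (u^α)) := by
      apply t12.congr'
      filter_upwards [self_mem_nhdsWithin] with x hx
      have hL1 : L (x*u) ≠ 0 := (hLpos _ (mul_pos hx hu)).ne'
      simp only [Function.comp_apply]
      rw [mul_comm u x]
      field_simp
    have t4 : Filter.Tendsto (fun x : ℝ => Real.exp (-u) * u^κ * (f (x*u) / L x))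
        (nhdsWithin 0 (Set.Ioi 0)) (nhds (Real.exp (-u) * u^(α+κ))) := by
      have := t3.const_mul (Real.exp (-u) * u^κ)
      have hval : Real.exp (-u) * u^κ * u^α = Real.exp (-u) * u^(α+κ) := by
        rw [mul_assoc, ← Real.rpow_add hu, add_comm]
      rw [hval] at this
      exact this
    apply t4.congr'
    have hTu : (0:ℝ) < T/u := by positivity
    filter_upwards [Ioo_mem_nhdsGT_of_mem ⟨le_refl (0:ℝ), hTu⟩] with x hx
    have hxu : x*u < T := by
      have := hx.2
      rw [lt_div_iff₀ hu] at this
      exact this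
    rw [if_pos hxu]
  -- domination
  have hdom : ∀ᶠ x in nhdsWithin (0:ℝ) (Set.Ioi 0),
      ∀ᵐ u ∂(MeasureTheory.volume.restrict (Set.Ioi (0:ℝ))),
        ‖if x*u < T then Real.exp (-u) * u^κ * (f (x*u) / L x) else 0‖ ≤ bound u := by
    filter_upwards [Ioo_mem_nhdsGT_of_mem ⟨le_refl (0:ℝ), hT⟩] with x hx
    rw [MeasureTheory.ae_restrict_iff' measurableSet_Ioi]
    filter_upwards with u hu
    replace hu : (0:ℝ) < u := hu
    have hbnonneg : 0 ≤ bound u := by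
      rw [hbdef]
      have := Real.rpow_nonneg hu.le κ
      have := Real.rpow_nonneg hu.le (κ+α+1)
      have : (0:ℝ) ≤ 2^(α+1) := Real.rpow_nonneg (by norm_num) _
      positivity
    by_cases hcase : x*u < T
    · have hb := hup x u hx.1 hu hcase
      have hfb := h1 (x*u) (mul_pos hx.1 hu) hcase
      have hLx := hLpos x hx.1
      have hru := Real.rpow_nonneg hu.le κ
      have hfLx : f (x*u)/L x ≤ 2*2^(α+1)*(1+u^(α+1)) := by
        rw [div_le_iff₀ hLx]
        calc f (x*u) ≤ 2 * L (x*u) := hfb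
          _ ≤ 2 * (2^(α+1)*(1+u^(α+1)) * L x) := by linarith
          _ = 2*2^(α+1)*(1+u^(α+1))*L x := by ring
      rw [if_pos hcase, Real.norm_eq_abs,
        abs_of_nonneg (mul_nonneg (mul_nonneg (Real.exp_nonneg _) hru)
          (div_nonneg (hf0 _) hLx.le))]
      have hsum : u^κ * u^(α+1) = u^(κ+α+1) := by
        rw [← Real.rpow_add hu]; ring_nf
      calc Real.exp (-u) * u^κ * (f (x*u)/L x)
          ≤ Real.exp (-u) * u^κ * (2*2^(α+1)*(1+u^(α+1))) :=
            mul_le_mul_of_nonneg_left hfLx (mul_nonneg (Real.exp_nonneg _) hru)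
        _ = bound u := by
            rw [hbdef]
            have expand : Real.exp (-u) * u^κ * (2*2^(α+1)*(1+u^(α+1)))
                = 2*2^(α+1) * (Real.exp (-u) * u^κ + Real.exp (-u) * (u^κ * u^(α+1))) := by
              ring
            rw [expand, hsum]
    · rw [if_neg hcase]
      simpa using hbnonneg
  -- measurability family
  have hmeas : ∀ᶠ x in nhdsWithin (0:ℝ) (Set.Ioi 0),
      MeasureTheory.AEStronglyMeasurable
        (fun u : ℝ => if x*u < T then Real.exp (-u) * u^κ * (f (x*u) / L x) else 0)
        (MeasureTheory.volume.restrict (Set.Ioi 0)) := by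
    filter_upwards [self_mem_nhdsWithin] with x hx
    exact hFfam_aesm x hx
  -- main part converges via dominated convergence
  have hGamma : Real.Gamma (α+κ+1) = ∫ u in Set.Ioi (0:ℝ), Real.exp (-u) * u^(α+κ) := by
    rw [Real.Gamma_eq_integral (by linarith : (0:ℝ) < α+κ+1)]
    congr 1
    funext u
    norm_num
  have hG : Filter.Tendsto
      (fun x : ℝ => ∫ u in Set.Ioi (0:ℝ),
        (if x*u < T then Real.exp (-u) * u^κ * (f (x*u) / L x) else 0))
      (nhdsWithin 0 (Set.Ioi 0)) (nhds (Real.Gamma (α+κ+1))) := by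
    rw [hGamma]
    exact MeasureTheory.tendsto_integral_filter_of_dominated_convergence bound hmeas hdom
      hbound_int hlim
  -- tail estimate
  set I := ∫ y in Set.Ioi (0:ℝ), f y with hIdef
  have hI0 : 0 ≤ I :=
    MeasureTheory.setIntegral_nonneg measurableSet_Ioi (fun y _ => hf0 y)
  have hItail : ∀ x : ℝ, 0 < x → x ≤ 1 →
      (∫ y in Set.Ici T, φ x y) ≤ K * Real.exp (-(T/(2*x))) * I := by
    intro x hx hx1
    have hptw : ∀ y ∈ Set.Ici T, φ x y ≤ K * Real.exp (-(T/(2*x))) * f y := by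
      intro y hy
      have hyT : T ≤ y := hy
      have hy0 : 0 < y := lt_of_lt_of_le hT hyT
      have hsplit2 : Real.exp (-y/x) = Real.exp (-(y/(2*x))) * Real.exp (-(y/(2*x))) := by
        rw [← Real.exp_add]
        congr 1
        field_simp
        ring
      have hm1 : Real.exp (-(y/(2*x))) ≤ Real.exp (-(T/(2*x))) := by
        apply Real.exp_le_exp.2
        have h0 : T/(2*x) ≤ y/(2*x) := by gcongr
        linarith
      have hm2 : Real.exp (-(y/(2*x))) ≤ Real.exp (-(y/2)) := by
        apply Real.exp_le_exp.2
        have h2x : y/2 ≤ y/(2*x) := by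
          rw [div_le_div_iff₀ (by norm_num) (by positivity)]
          nlinarith
        linarith
      have h2e : y ^ κ ≤ K * Real.exp (y/4) := hexp_bound y hy0
      have hA : Real.exp (-y/x) * y ^ κ ≤ K * Real.exp (-(T/(2*x))) := by
        have step : Real.exp (-y/x) * y ^ κ
            ≤ (Real.exp (-(T/(2*x))) * Real.exp (-(y/2))) * (K * Real.exp (y/4)) := by
          rw [hsplit2]
          exact mul_le_mul (mul_le_mul hm1 hm2 (Real.exp_nonneg _) (Real.exp_nonneg _)) h2e
            (Real.rpow_nonneg hy0.le _) (by positivity)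
        have e2 : Real.exp (-(y/2)) * Real.exp (y/4) ≤ 1 := by
          rw [← Real.exp_add]
          apply Real.exp_le_one_iff.2
          linarith
        calc Real.exp (-y/x) * y ^ κ
            ≤ (Real.exp (-(T/(2*x))) * Real.exp (-(y/2))) * (K * Real.exp (y/4)) := step
          _ = (K * Real.exp (-(T/(2*x)))) * (Real.exp (-(y/2)) * Real.exp (y/4)) := by ring
          _ ≤ (K * Real.exp (-(T/(2*x)))) * 1 := mul_le_mul_of_nonneg_left e2 (by positivity)
          _ = K * Real.exp (-(T/(2*x))) := mul_one _
      calc φ x y = (Real.exp (-y/x) * y ^ κ) * f y := rfl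
        _ ≤ (K * Real.exp (-(T/(2*x)))) * f y := mul_le_mul_of_nonneg_right hA (hf0 y)
    have hsub2 : Set.Ici T ⊆ Set.Ioi (0:ℝ) := fun y hy => lt_of_lt_of_le hT hy
    have hint1 : MeasureTheory.IntegrableOn (φ x) (Set.Ici T) :=
      MeasureTheory.IntegrableOn.mono_set (hφint x hx hx1) hsub2
    have hint2 : MeasureTheory.IntegrableOn (fun y => K * Real.exp (-(T/(2*x))) * f y)
        (Set.Ici T) := MeasureTheory.IntegrableOn.mono_set (hfint.const_mul _) hsub2
    calc (∫ y in Set.Ici T, φ x y) ≤ ∫ y in Set.Ici T, K * Real.exp (-(T/(2*x))) * f y :=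
        MeasureTheory.setIntegral_mono_on hint1 hint2 measurableSet_Ici hptw
      _ = K * Real.exp (-(T/(2*x))) * ∫ y in Set.Ici T, f y :=
        MeasureTheory.integral_const_mul _ _
      _ ≤ K * Real.exp (-(T/(2*x))) * I := by
          apply mul_le_mul_of_nonneg_left _ (by positivity)
          exact MeasureTheory.setIntegral_mono_set hfint
            (Filter.Eventually.of_forall hf0) hsub2.eventuallyLE
  have hTail0 : ∀ᶠ x in nhdsWithin (0:ℝ) (Set.Ioi 0),
      0 ≤ x^(-(κ+1)) * (∫ y in Set.Ici T, φ x y) / L x := by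
    filter_upwards [self_mem_nhdsWithin] with x hx
    have hnn : 0 ≤ ∫ y in Set.Ici T, φ x y :=
      MeasureTheory.setIntegral_nonneg measurableSet_Ici
        (fun y hy => hφ_nonneg x y (le_trans hT.le hy))
    exact div_nonneg (mul_nonneg (Real.rpow_nonneg (le_of_lt hx) _) hnn) (hLpos x hx).le
  set D := K * I / c with hDdef
  have hTailUB : ∀ᶠ x in nhdsWithin (0:ℝ) (Set.Ioi 0),
      x^(-(κ+1)) * (∫ y in Set.Ici T, φ x y) / L x
        ≤ D * ((x⁻¹)^(κ+α+2) * Real.exp (-(T/2) * x⁻¹)) := by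
    have hmin : (0:ℝ) < min 1 (T/2) := by positivity
    filter_upwards [Ioo_mem_nhdsGT_of_mem ⟨le_refl (0:ℝ), hmin⟩] with x hx
    obtain ⟨hx0, hxlt⟩ := hx
    have hx1 : x ≤ 1 := le_trans hxlt.le (min_le_left _ _)
    have hxT2 : x ≤ T/2 := le_trans hxlt.le (min_le_right _ _)
    have hLlow := hlow x hx0 hxT2
    have hLx := hLpos x hx0
    have hxa : (0:ℝ) < x^(α+1) := Real.rpow_pos_of_pos hx0 _
    have hnn : 0 ≤ ∫ y in Set.Ici T, φ x y :=
      MeasureTheory.setIntegral_nonneg measurableSet_Ici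
        (fun y hy => hφ_nonneg x y (le_trans hT.le hy))
    have hrp : (0:ℝ) < x^(-(κ+1)) := Real.rpow_pos_of_pos hx0 _
    have step1 : x^(-(κ+1)) * (∫ y in Set.Ici T, φ x y) / L x
        ≤ x^(-(κ+1)) * (K * Real.exp (-(T/(2*x))) * I) / (c * x^(α+1)) := by
      apply div_le_div₀ (by positivity)
        (mul_le_mul_of_nonneg_left (hItail x hx0 hx1) hrp.le) (by positivity) hLlow
    have e1 : x^(-(κ+1)) * (x^(α+1))⁻¹ = (x⁻¹)^(κ+α+2) := by
      rw [Real.inv_rpow hx0.le, ← Real.rpow_neg hx0.le, ← Real.rpow_neg hx0.le,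
        ← Real.rpow_add hx0]
      congr 1
      ring
    have e2 : -(T/(2*x)) = -(T/2) * x⁻¹ := by
      field_simp
    have step2 : x^(-(κ+1)) * (K * Real.exp (-(T/(2*x))) * I) / (c * x^(α+1))
        = D * ((x⁻¹)^(κ+α+2) * Real.exp (-(T/2) * x⁻¹)) := by
      rw [hDdef, ← e2, ← e1]
      field_simp
    calc x^(-(κ+1)) * (∫ y in Set.Ici T, φ x y) / L x
        ≤ x^(-(κ+1)) * (K * Real.exp (-(T/(2*x))) * I) / (c * x^(α+1)) := step1
      _ = D * ((x⁻¹)^(κ+α+2) * Real.exp (-(T/2) * x⁻¹)) := step2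
  have hRHS0 : Filter.Tendsto (fun x : ℝ => D * ((x⁻¹)^(κ+α+2) * Real.exp (-(T/2) * x⁻¹)))
      (nhdsWithin 0 (Set.Ioi 0)) (nhds 0) := by
    have hcomp := (tendsto_rpow_mul_exp_neg_mul_atTop_nhds_zero (κ+α+2) (T/2)
      (by positivity)).comp tendsto_inv_nhdsGT_zero
    have h0 : Filter.Tendsto (fun x : ℝ => (x⁻¹)^(κ+α+2) * Real.exp (-(T/2) * x⁻¹))
        (nhdsWithin 0 (Set.Ioi 0)) (nhds 0) := by
      simpa [Function.comp_def] using hcomp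
    simpa using h0.const_mul D
  have hTailT : Filter.Tendsto
      (fun x : ℝ => x^(-(κ+1)) * (∫ y in Set.Ici T, φ x y) / L x)
      (nhdsWithin 0 (Set.Ioi 0)) (nhds 0) :=
    tendsto_of_tendsto_of_tendsto_of_le_of_le' tendsto_const_nhds hRHS0 hTail0 hTailUB
  -- splitting identity
  have hsplit : ∀ᶠ x in nhdsWithin (0:ℝ) (Set.Ioi 0),
      (x ^ (-(κ + 1)) * ∫ y in Set.Ioi (0:ℝ), Real.exp (-y / x) * y ^ κ * f y) / L x
        = (∫ u in Set.Ioi (0:ℝ),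
            (if x*u < T then Real.exp (-u) * u^κ * (f (x*u) / L x) else 0))
          + x^(-(κ+1)) * (∫ y in Set.Ici T, φ x y) / L x := by
    filter_upwards [Ioo_mem_nhdsGT_of_mem ⟨le_refl (0:ℝ), hT⟩] with x hx
    obtain ⟨hx0, hxT⟩ := hx
    have hx1 : x ≤ 1 := le_trans hxT.le hT1
    have hLx := hLpos x hx0
    have hdisj : Disjoint (Set.Ioo 0 T) (Set.Ici T) :=
      (Set.Iio_disjoint_Ici (le_refl T)).mono_left Set.Ioo_subset_Iio_self
    have hsplit1 : ∫ y in Set.Ioi (0:ℝ), φ x y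
        = (∫ y in Set.Ioo 0 T, φ x y) + ∫ y in Set.Ici T, φ x y := by
      rw [← Set.Ioo_union_Ici_eq_Ioi hT]
      exact MeasureTheory.setIntegral_union hdisj measurableSet_Ici
        ((hφint x hx0 hx1).mono_set Set.Ioo_subset_Ioi_self)
        ((hφint x hx0 hx1).mono_set (fun y hy => lt_of_lt_of_le hT hy))
    have hind : ∫ y in Set.Ioo 0 T, φ x y
        = ∫ y in Set.Ioi (0:ℝ), (Set.Iio T).indicator (φ x) y := by
      rw [MeasureTheory.setIntegral_indicator measurableSet_Iio, Set.Ioi_inter_Iio]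
    have hCOV : ∫ y in Set.Ioi (0:ℝ), (Set.Iio T).indicator (φ x) y
        = x * ∫ u in Set.Ioi (0:ℝ), (Set.Iio T).indicator (φ x) (x*u) := by
      have hc2 := MeasureTheory.integral_comp_mul_left_Ioi
        ((Set.Iio T).indicator (φ x)) 0 hx0
      rw [mul_zero] at hc2
      rw [hc2, smul_eq_mul, ← mul_assoc, mul_inv_cancel₀ hx0.ne', one_mul]
    have hmain : x^(-(κ+1)) * (x * ∫ u in Set.Ioi (0:ℝ),
          (Set.Iio T).indicator (φ x) (x*u)) / L x
        = ∫ u in Set.Ioi (0:ℝ),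
            (if x*u < T then Real.exp (-u) * u^κ * (f (x*u) / L x) else 0) := by
      have hfactor : x^(-(κ+1)) * (x * ∫ u in Set.Ioi (0:ℝ),
            (Set.Iio T).indicator (φ x) (x*u)) / L x
          = (x^(-(κ+1)) * x / L x) * ∫ u in Set.Ioi (0:ℝ),
              (Set.Iio T).indicator (φ x) (x*u) := by
        ring
      rw [hfactor, ← MeasureTheory.integral_const_mul]
      apply MeasureTheory.setIntegral_congr_fun measurableSet_Ioi
      intro u hu
      replace hu : (0:ℝ) < u := hu
      dsimp only
      have hxx : x^(-(κ+1)) * x * x^κ = 1 := by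
        have h1' : x^(-(κ+1)) * x * x^κ = x^(-(κ+1)) * x^(1:ℝ) * x^κ := by
          rw [Real.rpow_one]
        rw [h1', ← Real.rpow_add hx0, ← Real.rpow_add hx0]
        rw [show -(κ+1)+1+κ = (0:ℝ) by ring, Real.rpow_zero]
      by_cases hcase : x*u < T
      · rw [Set.indicator_of_mem (show x*u ∈ Set.Iio T from hcase), if_pos hcase]
        have hdiv : -(x*u)/x = -u := by field_simp
        have hmulr : (x*u)^κ = x^κ * u^κ := Real.mul_rpow hx0.le hu.le
        show (x^(-(κ+1)) * x / L x) * (Real.exp (-(x*u)/x) * (x*u)^κ * f (x*u))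
            = Real.exp (-u) * u^κ * (f (x*u)/L x)
        rw [hdiv, hmulr]
        calc (x^(-(κ+1)) * x / L x) * (Real.exp (-u) * (x^κ*u^κ) * f (x*u))
            = (x^(-(κ+1)) * x * x^κ) * (Real.exp (-u) * u^κ * f (x*u)) / L x := by ring
          _ = Real.exp (-u) * u^κ * (f (x*u)/L x) := by rw [hxx]; ring
      · rw [Set.indicator_of_notMem (show x*u ∉ Set.Iio T from hcase), if_neg hcase,
          mul_zero]
    calc (x ^ (-(κ + 1)) * ∫ y in Set.Ioi (0:ℝ), Real.exp (-y / x) * y ^ κ * f y) / L x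
        = (x ^ (-(κ + 1)) * ∫ y in Set.Ioi (0:ℝ), φ x y) / L x := rfl
      _ = (x ^ (-(κ+1)) * ((∫ y in Set.Ioo 0 T, φ x y) + ∫ y in Set.Ici T, φ x y)) / L x := by
          rw [hsplit1]
      _ = x^(-(κ+1)) * (∫ y in Set.Ioo 0 T, φ x y) / L x
          + x^(-(κ+1)) * (∫ y in Set.Ici T, φ x y) / L x := by ring
      _ = (∫ u in Set.Ioi (0:ℝ),
            (if x*u < T then Real.exp (-u) * u^κ * (f (x*u) / L x) else 0))
          + x^(-(κ+1)) * (∫ y in Set.Ici T, φ x y) / L x := by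
          rw [hind, hCOV, hmain]
  have hfinal := hG.add hTailT
  rw [add_zero] at hfinal
  exact Filter.Tendsto.congr'
    (by filter_upwards [hsplit] with x hx using hx.symm) hfinal
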